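/- arXiv:2309.01222 — 2 statements merged into one kernel-verified Lean document; each statement's English description precedes it below -/
import Mathlib

section
/- Let F = ℤ/2ℤ and let M and N be modules over the polynomial ring F[X]. Suppose B : M × N → F is an F-bilinear pairing satisfying the adjointness property B(X·m, n) = B(m, X·n) for all m ∈ M and n ∈ N. If there exist elements c₋ ∈ M and c₊ ∈ N with X·c₋ = 0, X·c₊ = 0, and B(c₋, c₊) ≠ 0, then M admits a direct summand (as an F[X]-module) isomorphic to F[X]/(X), i.e. to F with X acting by zero. -/
/-- Let `F = ℤ/2ℤ` and let `M`, `N` be modules over `F[X]`.  If `B : M × N → F` is an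
`F`-bilinear pairing with `B (X • m) n = B m (X • n)`, and there are `cm ∈ M`, `cp ∈ N`
killed by `X` with `B cm cp ≠ 0`, then `M` has a direct `F[X]`-summand isomorphic to
`F[X]/(X)`. -/
theorem taut_foliation_summand
    {M N : Type*} [AddCommGroup M] [AddCommGroup N]
    [Module (Polynomial (ZMod 2)) M] [Module (Polynomial (ZMod 2)) N]
    [Module (ZMod 2) M] [Module (ZMod 2) N]
    [IsScalarTower (ZMod 2) (Polynomial (ZMod 2)) M]
    [IsScalarTower (ZMod 2) (Polynomial (ZMod 2)) N]
    (B : M →ₗ[ZMod 2] N →ₗ[ZMod 2] ZMod 2)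
    (hB : ∀ (m : M) (n : N),
      B ((Polynomial.X : Polynomial (ZMod 2)) • m) n
        = B m ((Polynomial.X : Polynomial (ZMod 2)) • n))
    (cm : M) (cp : N)
    (hcm : (Polynomial.X : Polynomial (ZMod 2)) • cm = 0)
    (hcp : (Polynomial.X : Polynomial (ZMod 2)) • cp = 0)
    (hpair : B cm cp ≠ 0) :
    ∃ S T : Submodule (Polynomial (ZMod 2)) M, IsCompl S T ∧
      Nonempty (S ≃ₗ[Polynomial (ZMod 2)]
        (Polynomial (ZMod 2) ⧸ Ideal.span {(Polynomial.X : Polynomial (ZMod 2))})) := by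
  set R := Polynomial (ZMod 2)
  -- key: the pairing with cp only sees the constant coefficient of the scalar
  have key : ∀ (r : R) (m : M), B (r • m) cp = r.coeff 0 * B m cp := by
    intro r
    induction r using Polynomial.induction_on with
    | C a =>
        intro m
        rw [← Polynomial.algebraMap_eq, algebraMap_smul, map_smul]
        simp [Polynomial.coeff_C_zero, smul_eq_mul]
    | add p q hp hq =>
        intro m
        rw [add_smul, map_add, LinearMap.add_apply, hp, hq, Polynomial.coeff_add, add_mul]
    | monomial n a ih =>
        intro m
        have h1 : (Polynomial.C a * Polynomial.X ^ (n + 1) : R) • m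
            = (Polynomial.C a * Polynomial.X ^ n : R) • ((Polynomial.X : R) • m) := by
          rw [pow_succ, ← mul_assoc, mul_smul]
        rw [h1, ih, hB, hcp, map_zero]
        simp [Polynomial.coeff_C_mul, Polynomial.coeff_X_pow]
  have smul_cm : ∀ r : R, r • cm = (Polynomial.C (r.coeff 0) : R) • cm := by
    intro r
    conv_lhs => rw [← Polynomial.X_mul_divX_add r]
    rw [add_smul, mul_comm, mul_smul, hcm, smul_zero, zero_add]
  have hBcm : B cm cp = 1 := by
    revert hpair; generalize B cm cp = x; revert x; decide
  have hcm_ne : cm ≠ 0 := by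
    intro h; apply hpair; rw [h, map_zero, LinearMap.zero_apply]
  refine ⟨Submodule.span R {cm},
    { carrier := {m | B m cp = 0}
      add_mem' := by intro a b ha hb; simp only [Set.mem_setOf_eq] at *
                     rw [map_add, LinearMap.add_apply, ha, hb, add_zero]
      zero_mem' := by simp
      smul_mem' := by intro r m hm; simp only [Set.mem_setOf_eq] at *
                      rw [key, hm, mul_zero] }, ?_, ?_⟩
  · constructor
    · -- disjoint
      rw [Submodule.disjoint_def]
      intro m hmS hmT
      rcases Submodule.mem_span_singleton.mp hmS with ⟨r, rfl⟩
      simp only [Submodule.mem_mk, AddSubmonoid.mem_mk, AddSubsemigroup.mem_mk,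
        Set.mem_setOf_eq] at hmT
      rw [key, hBcm, mul_one] at hmT
      rw [smul_cm, hmT]
      simp
    · -- codisjoint
      rw [codisjoint_iff, eq_top_iff]
      intro m _
      rw [Submodule.mem_sup]
      refine ⟨(Polynomial.C (B m cp) : R) • cm, Submodule.smul_mem _ _
        (Submodule.mem_span_singleton_self cm), m - (Polynomial.C (B m cp) : R) • cm, ?_, by abel⟩
      simp only [Submodule.mem_mk, AddSubmonoid.mem_mk, AddSubsemigroup.mem_mk, Set.mem_setOf_eq]
      rw [map_sub, LinearMap.sub_apply, key, hBcm, Polynomial.coeff_C_zero, mul_one, sub_self]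
  · -- isomorphism
    set f : R →ₗ[R] M := LinearMap.toSpanSingleton R M cm with hf
    have hrange : LinearMap.range f = Submodule.span R {cm} :=
      (LinearMap.span_singleton_eq_range R M cm).symm
    have hker : LinearMap.ker f = (Ideal.span {(Polynomial.X : R)} : Ideal R) := by
      apply le_antisymm
      · intro r hr
        rw [LinearMap.mem_ker] at hr
        change r • cm = 0 at hr
        rw [smul_cm] at hr
        rw [← Polynomial.algebraMap_eq, algebraMap_smul] at hr
        have h0 : r.coeff 0 = 0 := by
          by_contra h
          have h1 : r.coeff 0 = 1 := by revert h; generalize r.coeff 0 = x; revert x; decide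
          rw [h1, one_smul] at hr
          exact hcm_ne hr
        rw [Ideal.mem_span_singleton]
        exact Polynomial.X_dvd_iff.mpr h0
      · rw [Ideal.span_le]
        intro x hx
        rcases hx with rfl
        rw [SetLike.mem_coe, LinearMap.mem_ker]
        change (Polynomial.X : R) • cm = 0
        exact hcm
    exact ⟨(LinearEquiv.ofEq _ _ hrange.symm).trans <|
      f.quotKerEquivRange.symm.trans <| Submodule.quotEquivOfEq _ _ hker⟩
end

section
/- Let F = ℤ/2ℤ, let ι be a finite index set, and let k : ι → ℕ assign to each i a positive integer k i. Let M = ⨁_{i ∈ ι} F[X]/(X^{k i}) as an F[X]-module. Suppose there exist c ∈ M with X·c = 0 and an F-linear map φ : M → F with φ(X·m) = 0 for all m ∈ M and φ(c) ≠ 0. Then k i = 1 for some i ∈ ι. -/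
open DirectSum

/-- Let `F = ℤ/2ℤ`, `ι` a finite index set, `k i ≥ 1`, and
`M = ⨁ i, F[X]/(X ^ k i)` as an `F[X]`-module.  If there are `c ∈ M` with `X • c = 0`
and an `F`-linear `φ : M → F` with `φ (X • m) = 0` for all `m` and `φ c ≠ 0`, then
`k i = 1` for some `i`. -/
theorem cyclic_summand_of_length_one
    {ι : Type*} [Fintype ι] (k : ι → ℕ) (hk : ∀ i, 0 < k i)
    (c : ⨁ i : ι, Polynomial (ZMod 2) ⧸
      Ideal.span {(Polynomial.X : Polynomial (ZMod 2)) ^ k i})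
    (hc : (Polynomial.X : Polynomial (ZMod 2)) • c = 0)
    (φ : (⨁ i : ι, Polynomial (ZMod 2) ⧸
      Ideal.span {(Polynomial.X : Polynomial (ZMod 2)) ^ k i}) →ₗ[ZMod 2] ZMod 2)
    (hφX : ∀ m, φ ((Polynomial.X : Polynomial (ZMod 2)) • m) = 0)
    (hφc : φ c ≠ 0) :
    ∃ i, k i = 1 := by
  classical
  by_contra h
  push_neg at h
  have hk2 : ∀ i, 2 ≤ k i := fun i => by have := hk i; have := h i; omega
  set R := Polynomial (ZMod 2)
  apply hφc
  have hc' : ∀ i, (Polynomial.X : R) • (c i) = 0 := by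
    intro i
    have := congrArg (fun x => x i) hc
    simpa [DirectSum.smul_apply] using this
  have key : ∀ i, ∃ m, c i = (Polynomial.X : R) • m := by
    intro i
    obtain ⟨p, hp⟩ := Ideal.Quotient.mk_surjective (c i)
    have hmem : (Polynomial.X : R) * p ∈ Ideal.span {(Polynomial.X : R) ^ k i} := by
      rw [← Ideal.Quotient.eq_zero_iff_mem]
      have : (Ideal.Quotient.mk (Ideal.span {(Polynomial.X : R) ^ k i})) ((Polynomial.X : R) * p)
          = (Polynomial.X : R) • (c i) := by
        rw [← hp]
        rfl
      rw [this, hc' i]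
    rw [Ideal.mem_span_singleton] at hmem
    obtain ⟨r, hr⟩ := hmem
    have hk2i := hk2 i
    have hpeq : p = Polynomial.X * ((Polynomial.X : R) ^ (k i - 2) * r) := by
      have hX : (Polynomial.X : R) ≠ 0 := Polynomial.X_ne_zero
      apply mul_left_cancel₀ hX
      rw [hr]
      have : (Polynomial.X : R) ^ k i = Polynomial.X * (Polynomial.X * Polynomial.X ^ (k i - 2)) := by
        rw [← pow_succ', ← pow_succ']
        congr 1
        omega
      rw [this]
      ring
    refine ⟨Ideal.Quotient.mk _ ((Polynomial.X : R) ^ (k i - 2) * r), ?_⟩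
    rw [← hp, hpeq]
    rfl
  choose m hm using key
  have hcsum : c = ∑ i, DirectSum.lof R ι _ i (c i) := by
    simp only [DirectSum.lof_eq_of]
    exact (DirectSum.sum_univ_of c).symm
  rw [hcsum, map_sum]
  apply Finset.sum_eq_zero
  intro i _
  rw [hm i, LinearMap.map_smul]
  exact hφX _
end
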